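/- Let W be the Wythoff swap sequence and F_k the Fibonacci numbers. Then for all k ≥ 1: W(F_{2k+1} − 1) = F_{2k+2} − 1 and W(F_{2k+1}) = F_{2k}. -/

import Mathlib

private lemma sqrt5_lt : Real.sqrt 5 < 3 := by
  nlinarith [Real.sq_sqrt (by norm_num : (5:ℝ) ≥ 0), Real.sqrt_nonneg 5]

private lemma sqrt5_gt : 2 < Real.sqrt 5 := by
  nlinarith [Real.sq_sqrt (by norm_num : (5:ℝ) ≥ 0), Real.sqrt_nonneg 5]

private lemma fib_phi (φ : ℝ) (hφ : φ = (1 + Real.sqrt 5) / 2) :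
    ∀ n : ℕ, (Nat.fib n : ℝ) * φ = Nat.fib (n + 1) - ((1 - Real.sqrt 5) / 2) ^ n := by
  have h5 : Real.sqrt 5 * Real.sqrt 5 = 5 := Real.mul_self_sqrt (by norm_num)
  intro n
  induction n using Nat.twoStepInduction with
  | zero => simp
  | one => simp [hφ]; ring
  | more n ih1 ih2 =>
    have e1 : (Nat.fib (n + 2) : ℝ) = Nat.fib n + Nat.fib (n + 1) := by
      rw [Nat.fib_add_two]; push_cast; ring
    have e2 : (Nat.fib (n + 3) : ℝ) = Nat.fib (n + 1) + Nat.fib (n + 2) := by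
      rw [show n + 3 = (n + 1) + 2 from rfl, Nat.fib_add_two]; push_cast; ring
    have hpsi2 : ((1 - Real.sqrt 5) / 2) ^ 2 = ((1 - Real.sqrt 5) / 2) + 1 := by
      nlinarith [h5]
    have hstep : ((1 - Real.sqrt 5) / 2) ^ (n + 2) =
        ((1 - Real.sqrt 5) / 2) ^ (n + 1) + ((1 - Real.sqrt 5) / 2) ^ n := by
      rw [pow_add, hpsi2]; ring
    rw [e1, add_mul, ih1, ih2, e2, hstep]
    ring

private lemma psi_even_bounds (j : ℕ) :
    0 < ((1 - Real.sqrt 5) / 2) ^ (2 * j + 2) ∧ ((1 - Real.sqrt 5) / 2) ^ (2 * j + 2) < 1 := by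
  have h1 : |(1 - Real.sqrt 5) / 2| < 1 := by
    rw [abs_lt]; constructor <;> nlinarith [sqrt5_lt, sqrt5_gt]
  have h2 : ((1 - Real.sqrt 5) / 2) ≠ 0 := by nlinarith [sqrt5_gt]
  constructor
  · have := pow_pos (a := ((1 - Real.sqrt 5) / 2) ^ 2) (by positivity) (j + 1)
    rwa [← pow_mul, show 2 * (j + 1) = 2 * j + 2 by ring] at this
  · calc ((1 - Real.sqrt 5) / 2) ^ (2 * j + 2) ≤ |((1 - Real.sqrt 5) / 2) ^ (2 * j + 2)| :=
        le_abs_self _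
    _ = |(1 - Real.sqrt 5) / 2| ^ (2 * j + 2) := by rw [abs_pow]
    _ < 1 := pow_lt_one₀ (abs_nonneg _) h1 (by omega)

private lemma psi_odd_bounds (j : ℕ) :
    -1 < ((1 - Real.sqrt 5) / 2) ^ (2 * j + 1) ∧ ((1 - Real.sqrt 5) / 2) ^ (2 * j + 1) < 0 := by
  have hneg : ((1 - Real.sqrt 5) / 2) < 0 := by nlinarith [sqrt5_gt]
  have h1 : |(1 - Real.sqrt 5) / 2| < 1 := by
    rw [abs_lt]; constructor <;> nlinarith [sqrt5_lt, sqrt5_gt]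
  constructor
  · have habs : |((1 - Real.sqrt 5) / 2) ^ (2 * j + 1)| < 1 := by
      rw [abs_pow]; exact pow_lt_one₀ (abs_nonneg _) h1 (by omega)
    have := neg_abs_le (((1 - Real.sqrt 5) / 2) ^ (2 * j + 1))
    linarith [abs_lt.mp habs]
  · exact Odd.pow_neg ⟨j, by ring⟩ hneg

/-- floor of φ * fib(odd) -/
private lemma floor_odd (φ : ℝ) (hφ : φ = (1 + Real.sqrt 5) / 2) (j : ℕ) :
    ⌊(Nat.fib (2 * j + 1) : ℝ) * φ⌋₊ = Nat.fib (2 * j + 2) := by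
  have key := fib_phi φ hφ (2 * j + 1)
  obtain ⟨hb1, hb2⟩ := psi_odd_bounds j
  rw [Nat.floor_eq_iff' (Nat.fib_pos.mpr (by omega)).ne']
  constructor
  · rw [key]; linarith
  · rw [key]; push_cast; linarith

/-- floor of φ * fib(even ≥ 2) -/
private lemma floor_even (φ : ℝ) (hφ : φ = (1 + Real.sqrt 5) / 2) (j : ℕ) :
    ⌊(Nat.fib (2 * j + 2) : ℝ) * φ⌋₊ = Nat.fib (2 * j + 3) - 1 := by
  have key := fib_phi φ hφ (2 * j + 2)
  obtain ⟨hb1, hb2⟩ := psi_even_bounds j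
  have hfib : 1 ≤ Nat.fib (2 * j + 3) := Nat.fib_pos.mpr (by omega)
  have hfib3 : 1 ≤ Nat.fib (2 * j + 3) - 1 := by
    have : 2 ≤ Nat.fib (2 * j + 3) := by
      calc 2 = Nat.fib 3 := rfl
      _ ≤ Nat.fib (2 * j + 3) := Nat.fib_mono (by omega)
    omega
  rw [Nat.floor_eq_iff' (by omega)]
  constructor
  · rw [key, Nat.cast_sub (by omega)]; push_cast; linarith
  · rw [key, Nat.cast_sub (by omega)]; push_cast; linarith

/-- Values of the Wythoff swap sequence near odd-indexed Fibonacci numbers: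
for all `k ≥ 1`, `W(F_{2k+1} − 1) = F_{2k+2} − 1` and `W(F_{2k+1}) = F_{2k}`. -/
theorem wythoff_swap_at_odd_fibonacci
    (φ : ℝ) (hφ : φ = (1 + Real.sqrt 5) / 2)
    (L U : ℕ → ℕ)
    (hL : ∀ n : ℕ, L n = ⌊(n : ℝ) * φ⌋₊)
    (hU : ∀ n : ℕ, U n = ⌊(n : ℝ) * φ ^ 2⌋₊)
    (W : ℕ → ℕ) (hW0 : W 0 = 0)
    (hWL : ∀ k : ℕ, 1 ≤ k → W (L k) = U k)
    (hWU : ∀ k : ℕ, 1 ≤ k → W (U k) = L k) :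
    ∀ k : ℕ, 1 ≤ k →
      W (Nat.fib (2 * k + 1) - 1) = Nat.fib (2 * k + 2) - 1 ∧
      W (Nat.fib (2 * k + 1)) = Nat.fib (2 * k) := by
  intro k hk
  obtain ⟨j, rfl⟩ : ∃ j, k = j + 1 := ⟨k - 1, by omega⟩
  have hphi2 : φ ^ 2 = φ + 1 := by
    have h5 : Real.sqrt 5 * Real.sqrt 5 = 5 := Real.mul_self_sqrt (by norm_num)
    rw [hφ]; nlinarith
  -- U n = n + L n
  have hUeq : ∀ n : ℕ, U n = n + L n := by
    intro n
    have hφpos : (0:ℝ) ≤ φ := by rw [hφ]; positivity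
    rw [hU, hL, hphi2, mul_add, mul_one,
      Nat.floor_add_natCast (mul_nonneg (Nat.cast_nonneg n) hφpos), add_comm]
  have hfib_pos : ∀ m : ℕ, 1 ≤ m → 1 ≤ Nat.fib m := fun m hm => Nat.fib_pos.mpr hm
  -- L (fib (2j+1)) = fib (2j+2)
  have hLodd : L (Nat.fib (2 * j + 1)) = Nat.fib (2 * j + 2) := by
    rw [hL]; exact floor_odd φ hφ j
  -- L (fib (2j+2)) = fib (2j+3) - 1
  have hLeven : L (Nat.fib (2 * j + 2)) = Nat.fib (2 * j + 3) - 1 := by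
    rw [hL]; exact floor_even φ hφ j
  have hfib23 : Nat.fib (2 * j + 3) = Nat.fib (2 * j + 1) + Nat.fib (2 * j + 2) := by
    rw [show 2 * j + 3 = (2 * j + 1) + 2 from rfl, Nat.fib_add_two]
  have hfib24 : Nat.fib (2 * j + 4) = Nat.fib (2 * j + 2) + Nat.fib (2 * j + 3) := by
    rw [show 2 * j + 4 = (2 * j + 2) + 2 from rfl, Nat.fib_add_two]
  have hU1 : U (Nat.fib (2 * j + 1)) = Nat.fib (2 * j + 3) := by
    rw [hUeq, hLodd, hfib23]
  have hU2 : U (Nat.fib (2 * j + 2)) = Nat.fib (2 * j + 4) - 1 := by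
    rw [hUeq, hLeven]
    have h1 := hfib_pos (2 * j + 3) (by omega)
    omega
  have e1 : 2 * (j + 1) + 1 = 2 * j + 3 := by ring
  have e2 : 2 * (j + 1) + 2 = 2 * j + 4 := by ring
  have e3 : 2 * (j + 1) = 2 * j + 2 := by ring
  rw [e1, e2, e3]
  constructor
  · have h := hWL _ (hfib_pos (2 * j + 2) (by omega))
    rw [hLeven, hU2] at h
    exact h
  · have : W (U (Nat.fib (2 * j + 1))) = L (Nat.fib (2 * j + 1)) :=
      hWU _ (hfib_pos _ (by omega))
    rw [hU1, hLodd] at this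
    exact this
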